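/- Let n ≥ 2 be an integer. Suppose t_1, …, t_{n−1} are integers satisfying t_i + t_j + t_k = 0 whenever i, j, k ∈ {1, …, n−1} with i + j + k = n, and t_s + t_{n−s} = 0 for all 1 ≤ s ≤ n−1. Then t_s = 0 for all 1 ≤ s ≤ n−1. -/
import Mathlib


/-- Let `n ≥ 2`. Suppose `t 1, …, t (n-1)` are integers satisfying
`t i + t j + t k = 0` whenever `i + j + k = n` (with `i, j, k ∈ {1, …, n-1}`), and
`t s + t (n - s) = 0` for all `1 ≤ s ≤ n - 1`. Then `t s = 0` for all `1 ≤ s ≤ n - 1`. -/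
theorem stmt_0 (n : ℕ) (hn : 2 ≤ n) (t : ℕ → ℤ)
    (h1 : ∀ i j k : ℕ, 1 ≤ i → i ≤ n - 1 → 1 ≤ j → j ≤ n - 1 → 1 ≤ k → k ≤ n - 1 →
      i + j + k = n → t i + t j + t k = 0)
    (h2 : ∀ s : ℕ, 1 ≤ s → s ≤ n - 1 → t s + t (n - s) = 0) :
    ∀ s : ℕ, 1 ≤ s → s ≤ n - 1 → t s = 0 := by
  have key : ∀ s : ℕ, 1 ≤ s → s ≤ n - 1 → t s = (s : ℤ) * t 1 := by
    intro s
    induction s with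
    | zero => intro h; omega
    | succ m ih =>
      intro _ hle
      by_cases hm : m = 0
      · subst hm; simp
      · have hm1 : 1 ≤ m := by omega
        have hmle : m ≤ n - 1 := by omega
        have h3 := h1 1 m (n - 1 - m) (by omega) (by omega) hm1 hmle
          (by omega) (by omega) (by omega)
        have h4 := h2 (m + 1) (by omega) hle
        have heq : n - (m + 1) = n - 1 - m := by omega
        rw [heq] at h4
        have h5 := ih hm1 hmle
        push_cast
        linarith
  have h5 := h2 1 (by omega) (by omega)
  have h6 := key (n - 1) (by omega) le_rfl
  have hcast : ((n - 1 : ℕ) : ℤ) = (n : ℤ) - 1 := by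
    have : 1 ≤ n := by omega
    push_cast [Nat.cast_sub this]
    ring
  rw [h6, hcast] at h5
  have hn' : (2 : ℤ) ≤ (n : ℤ) := by exact_mod_cast hn
  have ht1 : t 1 = 0 := by nlinarith [sq_nonneg (t 1)]
  intro s hs1 hs2
  rw [key s hs1 hs2, ht1, mul_zero]
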